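/- In a tribe, homotopy equivalences are saturated: a morphism is a homotopy equivalence if and only if it becomes an isomorphism in the homotopy category (the localization of the tribe at homotopy equivalences). Consequently, homotopy equivalences satisfy the 2-out-of-6 property. -/

import Mathlib

open CategoryTheory CategoryTheory.Limits

universe v u

namespace Paper

variable {T : Type u} [Category.{v} T]

/-- A morphism is anodyne (w.r.t. a class of fibrations) if it has the left
lifting property against all fibrations. -/
def Anodyne (Fib : MorphismProperty T) : MorphismProperty T :=
  fun _ _ i => ∀ ⦃u w : T⦄ (g : u ⟶ w), Fib g → HasLiftingProperty i g

/-- A tribe structure on a category `T`. -/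
structure TribeStruct (T : Type u) [Category.{v} T] where
  /-- fibrations -/
  Fib : MorphismProperty T
  fib_id : ∀ x : T, Fib (𝟙 x)
  fib_comp : ∀ {x y z : T} (f : x ⟶ y) (g : y ⟶ z), Fib f → Fib g → Fib (f ≫ g)
  /-- (T1): terminal object, all objects fibrant -/
  term : T
  isTerminal : IsTerminal term
  all_fibrant : ∀ x : T, Fib (isTerminal.from x)
  /-- (T2): pullbacks along fibrations exist and fibrations are stable -/
  pullback_exists : ∀ {x y z : T} (f : x ⟶ z) (g : y ⟶ z), Fib g → HasPullback f g
  fib_stable : ∀ {p x y z : T} {fst : p ⟶ x} {snd : p ⟶ y} {f : x ⟶ z} {g : y ⟶ z},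
    IsPullback fst snd f g → Fib g → Fib fst
  /-- (T3): factorization as anodyne followed by fibration -/
  factor : ∀ {x y : T} (f : x ⟶ y), ∃ (z : T) (i : x ⟶ z) (q : z ⟶ y),
    Anodyne Fib i ∧ Fib q ∧ i ≫ q = f
  /-- (T4): anodyne morphisms are stable under pullback along fibrations -/
  anodyne_stable : ∀ {p x y z : T} {fst : p ⟶ x} {snd : p ⟶ y} {f : x ⟶ z} {g : y ⟶ z},
    IsPullback fst snd f g → Anodyne Fib f → Fib g → Anodyne Fib snd

/-- A path object for `x` in a tribe: a factorization of the diagonal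
`x → x × x` as an anodyne morphism followed by a fibration (the product is
presented by an explicit binary product cone). -/
structure PathObject (R : TribeStruct T) (x : T) where
  P : T
  σ : x ⟶ P
  π₀ : P ⟶ x
  π₁ : P ⟶ x
  σ_anodyne : Anodyne R.Fib σ
  σ_π₀ : σ ≫ π₀ = 𝟙 x
  σ_π₁ : σ ≫ π₁ = 𝟙 x
  prod : T
  p₀ : prod ⟶ x
  p₁ : prod ⟶ x
  isProd : IsLimit (BinaryFan.mk p₀ p₁)
  π : P ⟶ prod
  π_p₀ : π ≫ p₀ = π₀
  π_p₁ : π ≫ p₁ = π₁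
  π_fib : R.Fib π

/-- Homotopy of morphisms in a tribe. -/
def Homotopic (R : TribeStruct T) {x y : T} (f g : x ⟶ y) : Prop :=
  ∃ (Po : PathObject R y) (H : x ⟶ Po.P), H ≫ Po.π₀ = f ∧ H ≫ Po.π₁ = g

/-- Homotopy equivalences in a tribe. -/
def IsHtpyEquiv (R : TribeStruct T) {x y : T} (f : x ⟶ y) : Prop :=
  ∃ g : y ⟶ x, Homotopic R (f ≫ g) (𝟙 x) ∧ Homotopic R (g ≫ f) (𝟙 y)

/-- Homotopy equivalences (= weak equivalences) of a tribe as a morphism property. -/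
def hW (R : TribeStruct T) : MorphismProperty T :=
  fun _ _ f => IsHtpyEquiv R f

end Paper

namespace Paper

section Aux

variable {T : Type u} [Category.{v} T]

lemma anodyne_comp {R : TribeStruct T} {x y z : T} {i : x ⟶ y} {j : y ⟶ z}
    (hi : Anodyne R.Fib i) (hj : Anodyne R.Fib j) : Anodyne R.Fib (i ≫ j) := by
  intro u w g hg
  haveI := hi g hg
  haveI := hj g hg
  infer_instance

lemma PathObject.isPB {R : TribeStruct T} {x : T} (Po : PathObject R x) :
    IsPullback Po.p₀ Po.p₁ (R.isTerminal.from x) (R.isTerminal.from x) :=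
  IsPullback.of_isLimit
    (isPullbackOfIsTerminalIsProduct _ _ _ _ R.isTerminal Po.isProd)

lemma PathObject.fib_p₀ {R : TribeStruct T} {x : T} (Po : PathObject R x) :
    R.Fib Po.p₀ :=
  R.fib_stable Po.isPB (R.all_fibrant x)

lemma PathObject.fib_p₁ {R : TribeStruct T} {x : T} (Po : PathObject R x) :
    R.Fib Po.p₁ :=
  R.fib_stable Po.isPB.flip (R.all_fibrant x)

lemma PathObject.fib_π₀ {R : TribeStruct T} {x : T} (Po : PathObject R x) :
    R.Fib Po.π₀ := by
  rw [← Po.π_p₀]; exact R.fib_comp _ _ Po.π_fib Po.fib_p₀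

lemma PathObject.fib_π₁ {R : TribeStruct T} {x : T} (Po : PathObject R x) :
    R.Fib Po.π₁ := by
  rw [← Po.π_p₁]; exact R.fib_comp _ _ Po.π_fib Po.fib_p₁

lemma exists_pathObject (R : TribeStruct T) (x : T) : Nonempty (PathObject R x) := by
  haveI := R.pullback_exists (R.isTerminal.from x) (R.isTerminal.from x) (R.all_fibrant x)
  have isProd : IsLimit (BinaryFan.mk
      (pullback.fst (R.isTerminal.from x) (R.isTerminal.from x))
      (pullback.snd (R.isTerminal.from x) (R.isTerminal.from x))) :=
    isProductOfIsTerminalIsPullback _ _ _ _ R.isTerminal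
      (pullbackIsPullback (R.isTerminal.from x) (R.isTerminal.from x))
  obtain ⟨P, i, q, hi, hq, hiq⟩ := R.factor (pullback.lift (f := R.isTerminal.from x) (g := R.isTerminal.from x) (𝟙 x) (𝟙 x) rfl)
  refine ⟨⟨P, i, q ≫ pullback.fst (R.isTerminal.from x) (R.isTerminal.from x),
    q ≫ pullback.snd (R.isTerminal.from x) (R.isTerminal.from x), hi,
    by rw [← Category.assoc, hiq, pullback.lift_fst],
    by rw [← Category.assoc, hiq, pullback.lift_snd],
    pullback (R.isTerminal.from x) (R.isTerminal.from x),
    pullback.fst _ _, pullback.snd _ _, isProd,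
    q, rfl, rfl, hq⟩⟩

/-- The path object with the two projections swapped. -/
def PathObject.swap {R : TribeStruct T} {x : T} (Po : PathObject R x) : PathObject R x where
  P := Po.P
  σ := Po.σ
  π₀ := Po.π₁
  π₁ := Po.π₀
  σ_anodyne := Po.σ_anodyne
  σ_π₀ := Po.σ_π₁
  σ_π₁ := Po.σ_π₀
  prod := Po.prod
  p₀ := Po.p₁
  p₁ := Po.p₀
  isProd := BinaryFan.isLimitMk
    (fun s => (BinaryFan.IsLimit.lift' Po.isProd s.snd s.fst).1)
    (fun s => (BinaryFan.IsLimit.lift' Po.isProd s.snd s.fst).2.2)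
    (fun s => (BinaryFan.IsLimit.lift' Po.isProd s.snd s.fst).2.1)
    (fun s m h1 h2 => BinaryFan.IsLimit.hom_ext Po.isProd
      (by simpa using h2.trans ((BinaryFan.IsLimit.lift' Po.isProd s.snd s.fst).2.1).symm)
      (by simpa using h1.trans ((BinaryFan.IsLimit.lift' Po.isProd s.snd s.fst).2.2).symm))
  π := Po.π
  π_p₀ := Po.π_p₁
  π_p₁ := Po.π_p₀
  π_fib := Po.π_fib

variable {R : TribeStruct T}

lemma homotopic_refl {x y : T} (f : x ⟶ y) : Homotopic R f f := by
  obtain ⟨Po⟩ := exists_pathObject R y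
  exact ⟨Po, f ≫ Po.σ, by rw [Category.assoc, Po.σ_π₀, Category.comp_id],
    by rw [Category.assoc, Po.σ_π₁, Category.comp_id]⟩

lemma homotopic_symm {x y : T} {f g : x ⟶ y} (h : Homotopic R f g) : Homotopic R g f := by
  obtain ⟨Po, H, h0, h1⟩ := h
  exact ⟨Po.swap, H, h1, h0⟩

/-- Any homotopy can be transferred to any given path object of the target. -/
lemma homotopic_via {x y : T} {f g : x ⟶ y} (h : Homotopic R f g) (Po' : PathObject R y) :
    ∃ H : x ⟶ Po'.P, H ≫ Po'.π₀ = f ∧ H ≫ Po'.π₁ = g := by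
  obtain ⟨Po, H, h0, h1⟩ := h
  obtain ⟨b, hb0, hb1⟩ : {l : Po.P ⟶ Po'.prod // l ≫ Po'.p₀ = Po.π₀ ∧ l ≫ Po'.p₁ = Po.π₁} :=
    BinaryFan.IsLimit.lift' Po'.isProd Po.π₀ Po.π₁
  have sq : CommSq Po'.σ Po.σ Po'.π b := ⟨by
    apply BinaryFan.IsLimit.hom_ext Po'.isProd <;>
      simp [Category.assoc, Po'.π_p₀, Po'.π_p₁, Po'.σ_π₀, Po'.σ_π₁, hb0, hb1,
        Po.σ_π₀, Po.σ_π₁]⟩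
  haveI := Po.σ_anodyne Po'.π Po'.π_fib
  refine ⟨H ≫ sq.lift, ?_, ?_⟩
  · rw [← Po'.π_p₀, Category.assoc, ← Category.assoc sq.lift, sq.fac_right, hb0, h0]
  · rw [← Po'.π_p₁, Category.assoc, ← Category.assoc sq.lift, sq.fac_right, hb1, h1]

lemma homotopic_trans {x y : T} {f g h : x ⟶ y} (hfg : Homotopic R f g)
    (hgh : Homotopic R g h) : Homotopic R f h := by
  obtain ⟨Po, K, k0, k1⟩ := hgh
  obtain ⟨H, h0, h1⟩ := homotopic_via hfg Po
  haveI := R.pullback_exists Po.π₁ Po.π₀ Po.fib_π₀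
  have fib_snd : R.Fib (pullback.snd Po.π₁ Po.π₀) :=
    R.fib_stable (IsPullback.of_hasPullback Po.π₁ Po.π₀).flip Po.fib_π₁
  have jcond : 𝟙 Po.P ≫ Po.π₁ = (Po.π₁ ≫ Po.σ) ≫ Po.π₀ := by
    rw [Category.id_comp, Category.assoc, Po.σ_π₀, Category.comp_id]
  have hj_anodyne : Anodyne R.Fib (pullback.lift (𝟙 Po.P) (Po.π₁ ≫ Po.σ) jcond) := by
    refine R.anodyne_stable (fst := Po.π₁) ?_ Po.σ_anodyne fib_snd
    refine IsPullback.of_isLimit (c := PullbackCone.mk Po.π₁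
      (pullback.lift (𝟙 Po.P) (Po.π₁ ≫ Po.σ) jcond) (by rw [pullback.lift_snd])) ?_
    have fac1 : ∀ s : PullbackCone Po.σ (pullback.snd Po.π₁ Po.π₀),
        (s.snd ≫ pullback.fst Po.π₁ Po.π₀) ≫ Po.π₁ = s.fst := by
      intro s
      rw [Category.assoc, pullback.condition, ← Category.assoc, ← s.condition,
        Category.assoc, Po.σ_π₀, Category.comp_id]
    refine PullbackCone.IsLimit.mk _ (fun s => s.snd ≫ pullback.fst Po.π₁ Po.π₀)
      fac1 (fun s => ?_) (fun s m hm1 hm2 => ?_)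
    · apply pullback.hom_ext
      · rw [Category.assoc, pullback.lift_fst, Category.comp_id]
      · rw [Category.assoc, pullback.lift_snd, ← Category.assoc, fac1 s, s.condition]
    · have := hm2 =≫ pullback.fst Po.π₁ Po.π₀
      rw [Category.assoc, pullback.lift_fst, Category.comp_id] at this
      exact this
  have sEcond : Po.σ ≫ Po.π₁ = Po.σ ≫ Po.π₀ := by rw [Po.σ_π₀, Po.σ_π₁]
  have hsE_eq : pullback.lift Po.σ Po.σ sEcond =
      Po.σ ≫ pullback.lift (𝟙 Po.P) (Po.π₁ ≫ Po.σ) jcond := by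
    apply pullback.hom_ext
    · rw [pullback.lift_fst, Category.assoc, pullback.lift_fst, Category.comp_id]
    · rw [pullback.lift_snd, Category.assoc, pullback.lift_snd, ← Category.assoc,
        Po.σ_π₁, Category.id_comp]
  have hsE_anodyne : Anodyne R.Fib (pullback.lift Po.σ Po.σ sEcond) := by
    rw [hsE_eq]; exact anodyne_comp Po.σ_anodyne hj_anodyne
  obtain ⟨b, hb0, hb1⟩ : {l : pullback Po.π₁ Po.π₀ ⟶ Po.prod //
      l ≫ Po.p₀ = pullback.fst Po.π₁ Po.π₀ ≫ Po.π₀ ∧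
      l ≫ Po.p₁ = pullback.snd Po.π₁ Po.π₀ ≫ Po.π₁} := BinaryFan.IsLimit.lift' Po.isProd
    (pullback.fst Po.π₁ Po.π₀ ≫ Po.π₀) (pullback.snd Po.π₁ Po.π₀ ≫ Po.π₁)
  have sq : CommSq Po.σ (pullback.lift Po.σ Po.σ sEcond) Po.π b := ⟨by
    refine BinaryFan.IsLimit.hom_ext Po.isProd (?_ : _ ≫ Po.p₀ = _ ≫ Po.p₀) (?_ : _ ≫ Po.p₁ = _ ≫ Po.p₁)
    · rw [Category.assoc, Category.assoc]
      rw [Po.π_p₀, hb0, Po.σ_π₀, ← Category.assoc, pullback.lift_fst, Po.σ_π₀]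
    · rw [Category.assoc, Category.assoc]
      rw [Po.π_p₁, hb1, Po.σ_π₁, ← Category.assoc, pullback.lift_snd, Po.σ_π₁]⟩
  haveI := hsE_anodyne Po.π Po.π_fib
  have c0 : sq.lift ≫ Po.π₀ = pullback.fst Po.π₁ Po.π₀ ≫ Po.π₀ := by
    have h := sq.fac_right =≫ Po.p₀
    rw [Category.assoc, Po.π_p₀, hb0] at h
    exact h
  have c1 : sq.lift ≫ Po.π₁ = pullback.snd Po.π₁ Po.π₀ ≫ Po.π₁ := by
    have h := sq.fac_right =≫ Po.p₁
    rw [Category.assoc, Po.π_p₁, hb1] at h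
    exact h
  refine ⟨Po, pullback.lift H K (h1.trans k0.symm) ≫ sq.lift, ?_, ?_⟩
  · rw [Category.assoc, c0, ← Category.assoc, pullback.lift_fst, h0]
  · rw [Category.assoc, c1, ← Category.assoc, pullback.lift_snd, k1]

lemma homotopic_precomp {w x y : T} (e : w ⟶ x) {f g : x ⟶ y} (h : Homotopic R f g) :
    Homotopic R (e ≫ f) (e ≫ g) := by
  obtain ⟨Po, H, h0, h1⟩ := h
  exact ⟨Po, e ≫ H, by rw [Category.assoc, h0], by rw [Category.assoc, h1]⟩

lemma homotopic_postcomp {x y z : T} {f g : x ⟶ y} (k : y ⟶ z) (h : Homotopic R f g) :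
    Homotopic R (f ≫ k) (g ≫ k) := by
  obtain ⟨Po, H, h0, h1⟩ := h
  obtain ⟨Po'⟩ := exists_pathObject R z
  obtain ⟨b, hb0, hb1⟩ : {l : Po.P ⟶ Po'.prod //
      l ≫ Po'.p₀ = Po.π₀ ≫ k ∧ l ≫ Po'.p₁ = Po.π₁ ≫ k} :=
    BinaryFan.IsLimit.lift' Po'.isProd (Po.π₀ ≫ k) (Po.π₁ ≫ k)
  have sq : CommSq (k ≫ Po'.σ) Po.σ Po'.π b := ⟨by
    refine BinaryFan.IsLimit.hom_ext Po'.isProd (?_ : _ ≫ Po'.p₀ = _ ≫ Po'.p₀) (?_ : _ ≫ Po'.p₁ = _ ≫ Po'.p₁)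
    · simp only [Category.assoc, BinaryFan.mk_fst]
      rw [Po'.π_p₀, Po'.σ_π₀, Category.comp_id, hb0, ← Category.assoc, Po.σ_π₀,
        Category.id_comp]
    · simp only [Category.assoc, BinaryFan.mk_snd]
      rw [Po'.π_p₁, Po'.σ_π₁, Category.comp_id, hb1, ← Category.assoc, Po.σ_π₁,
        Category.id_comp]⟩
  haveI := Po.σ_anodyne Po'.π Po'.π_fib
  refine ⟨Po', H ≫ sq.lift, ?_, ?_⟩
  · rw [← Po'.π_p₀, Category.assoc, ← Category.assoc sq.lift, sq.fac_right, hb0,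
      ← Category.assoc, h0]
  · rw [← Po'.π_p₁, Category.assoc, ← Category.assoc sq.lift, sq.fac_right, hb1,
      ← Category.assoc, h1]

/-- The anodyne map `σ : x → Px` is a homotopy equivalence. -/
lemma sigma_isHtpyEquiv {x : T} (Po : PathObject R x) : IsHtpyEquiv R Po.σ := by
  refine ⟨Po.π₀, by rw [Po.σ_π₀]; exact homotopic_refl _, ?_⟩
  obtain ⟨Q⟩ := exists_pathObject R Po.P
  obtain ⟨b, hb0, hb1⟩ : {l : Po.P ⟶ Q.prod //
      l ≫ Q.p₀ = Po.π₀ ≫ Po.σ ∧ l ≫ Q.p₁ = 𝟙 Po.P} :=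
    BinaryFan.IsLimit.lift' Q.isProd (Po.π₀ ≫ Po.σ) (𝟙 Po.P)
  have sq : CommSq (Po.σ ≫ Q.σ) Po.σ Q.π b := ⟨by
    refine BinaryFan.IsLimit.hom_ext Q.isProd (?_ : _ ≫ Q.p₀ = _ ≫ Q.p₀) (?_ : _ ≫ Q.p₁ = _ ≫ Q.p₁)
    · simp only [Category.assoc, BinaryFan.mk_fst]
      rw [Q.π_p₀, Q.σ_π₀, Category.comp_id, hb0, ← Category.assoc, Po.σ_π₀,
        Category.id_comp]
    · simp only [Category.assoc, BinaryFan.mk_snd]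
      rw [Q.π_p₁, Q.σ_π₁, Category.comp_id, hb1, Category.comp_id]⟩
  haveI := Po.σ_anodyne Q.π Q.π_fib
  refine ⟨Q, sq.lift, ?_, ?_⟩
  · rw [← Q.π_p₀, ← Category.assoc, sq.fac_right, hb0]
  · rw [← Q.π_p₁, ← Category.assoc, sq.fac_right, hb1]

/-- Homotopy as a hom relation. -/
def homRel (R : TribeStruct T) : HomRel T := fun _ _ f g => Homotopic R f g

lemma congruence_homRel (R : TribeStruct T) : Congruence (homRel R) where
  equivalence := ⟨fun f => homotopic_refl f, homotopic_symm, homotopic_trans⟩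
  comp_left := fun e _ _ h => homotopic_precomp e h
  comp_right := fun k h => homotopic_postcomp k h

/-- Homotopic maps are identified in the localization. -/
lemma loc_map_eq {x y : T} {f g : x ⟶ y} (h : Homotopic R f g) :
    (hW R).Q.map f = (hW R).Q.map g := by
  obtain ⟨Po, H, h0, h1⟩ := h
  have hσ : IsIso ((hW R).Q.map Po.σ) :=
    Localization.inverts (hW R).Q (hW R) Po.σ (sigma_isHtpyEquiv Po)
  have e0 : (hW R).Q.map Po.σ ≫ (hW R).Q.map Po.π₀ = 𝟙 _ := by
    rw [← Functor.map_comp, Po.σ_π₀, CategoryTheory.Functor.map_id]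
  have e1 : (hW R).Q.map Po.σ ≫ (hW R).Q.map Po.π₁ = 𝟙 _ := by
    rw [← Functor.map_comp, Po.σ_π₁, CategoryTheory.Functor.map_id]
  have eπ : (hW R).Q.map Po.π₀ = (hW R).Q.map Po.π₁ := by
    rw [← IsIso.inv_eq_of_hom_inv_id e0, ← IsIso.inv_eq_of_hom_inv_id e1]
  rw [← h0, ← h1, Functor.map_comp, Functor.map_comp, eπ]

end Aux

end Paper


open Paper in
/-- In a tribe, homotopy equivalences are saturated: a morphism
is a homotopy equivalence iff it becomes an isomorphism in the localization of
the tribe at the homotopy equivalences.  Consequently homotopy equivalences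
satisfy the 2-out-of-6 property. -/
theorem htpyEquiv_saturated {T : Type u} [Category.{v} T] (R : Paper.TribeStruct T) :
    (∀ {x y : T} (f : x ⟶ y), IsHtpyEquiv R f ↔ IsIso ((hW R).Q.map f)) ∧
    (∀ {a b c d : T} (f : a ⟶ b) (g : b ⟶ c) (h : c ⟶ d),
      IsHtpyEquiv R (f ≫ g) → IsHtpyEquiv R (g ≫ h) →
      IsHtpyEquiv R f ∧ IsHtpyEquiv R g ∧ IsHtpyEquiv R h ∧ IsHtpyEquiv R (f ≫ g ≫ h)) := by
  haveI : Congruence (homRel R) := congruence_homRel R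
  have main : ∀ {x y : T} (f : x ⟶ y), IsHtpyEquiv R f ↔ IsIso ((hW R).Q.map f) := by
    intro x y f
    constructor
    · intro hf
      exact Localization.inverts (hW R).Q (hW R) f hf
    · intro hf
      set F := CategoryTheory.Quotient.functor (homRel R) with hF
      have hinv : (hW R).IsInvertedBy F := by
        rintro u v φ ⟨ψ, h1, h2⟩
        refine ⟨⟨F.map ψ, ?_, ?_⟩⟩
        · rw [← F.map_comp, ← F.map_id]
          exact CategoryTheory.Quotient.sound _ h1
        · rw [← F.map_comp, ← F.map_id]
          exact CategoryTheory.Quotient.sound _ h2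
      set G := Localization.Construction.lift F hinv with hG
      haveI : IsIso (((hW R).Q ⋙ G).map f) := by
        dsimp only [Functor.comp_map]
        infer_instance
      have hFiso : IsIso (F.map f) := by
        rw [Functor.congr_hom (Localization.Construction.fac F hinv).symm f]
        infer_instance
      obtain ⟨g, hg⟩ := F.map_surjective (inv (F.map f))
      refine ⟨g, ?_, ?_⟩
      · have : F.map (f ≫ g) = F.map (𝟙 x) := by
          rw [F.map_comp, hg, IsIso.hom_inv_id, F.map_id]
        exact (CategoryTheory.Quotient.functor_map_eq_iff (homRel R) _ _).1 this
      · have : F.map (g ≫ f) = F.map (𝟙 y) := by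
          rw [F.map_comp, hg, IsIso.inv_hom_id, F.map_id]
        exact (CategoryTheory.Quotient.functor_map_eq_iff (homRel R) _ _).1 this
  refine ⟨main, ?_⟩
  intro a b c d f g h hfg hgh
  set Q := (hW R).Q with hQ
  have i1 : IsIso (Q.map f ≫ Q.map g) := by
    rw [← Functor.map_comp]; exact (main _).1 hfg
  have i2 : IsIso (Q.map g ≫ Q.map h) := by
    rw [← Functor.map_comp]; exact (main _).1 hgh
  have hg_iso : IsIso (Q.map g) := by
    set r : Q.obj c ⟶ Q.obj b := Q.map h ≫ inv (Q.map g ≫ Q.map h) with hr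
    set l : Q.obj c ⟶ Q.obj b := inv (Q.map f ≫ Q.map g) ≫ Q.map f with hl
    have hgr : Q.map g ≫ r = 𝟙 _ := by
      rw [hr, ← Category.assoc, IsIso.hom_inv_id]
    have hlg : l ≫ Q.map g = 𝟙 _ := by
      rw [hl, Category.assoc, IsIso.inv_hom_id]
    have hrg : r ≫ Q.map g = 𝟙 _ := by
      have hlr : l = r := by
        calc l = l ≫ Q.map g ≫ r := by rw [hgr, Category.comp_id]
        _ = (l ≫ Q.map g) ≫ r := by rw [← Category.assoc]
        _ = r := by rw [hlg, Category.id_comp]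
      rw [← hlr]; exact hlg
    exact ⟨⟨r, hgr, hrg⟩⟩
  haveI := hg_iso
  haveI := i1
  haveI := i2
  have hf_iso : IsIso (Q.map f) := IsIso.of_isIso_comp_right (Q.map f) (Q.map g)
  have hh_iso : IsIso (Q.map h) := IsIso.of_isIso_comp_left (Q.map g) (Q.map h)
  haveI := hf_iso; haveI := hh_iso
  refine ⟨(main f).2 hf_iso, (main g).2 hg_iso, (main h).2 hh_iso, (main _).2 ?_⟩
  rw [Functor.map_comp, Functor.map_comp]
  infer_instance
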